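/- Let p, L be positive integers and c_1, …, c_p pairwise distinct nonzero complex numbers. Consider the pL × pL matrix whose rows are indexed by k = 1, …, pL and columns by pairs (j,q) with 1 ≤ j ≤ p, 0 ≤ q ≤ L−1, with entry binom(k+L, q) · c_j^{k+L−q}. Then this matrix is invertible. -/

import Mathlib

/-!
STATEMENT 7: Let `p, L` be positive integers and `c_1, …, c_p` pairwise
distinct nonzero complex numbers.  The `pL × pL` matrix with rows indexed by
`k = 1, …, pL` and columns by pairs `(j, q)` (`1 ≤ j ≤ p`, `0 ≤ q ≤ L−1`),
with entry `binom(k+L, q) · c_j^{k+L−q}`, is invertible (a confluent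
Vandermonde matrix with distinct nonzero nodes of multiplicity `L`).
Rows are modelled by `k : Fin (p*L)` (with value `k+1 ∈ {1,…,pL}`) and columns
by `Fin (p*L)` via the equivalence `finProdFinEquiv : Fin p × Fin L ≃ Fin (p*L)`.
-/

theorem confluent_vandermonde_invertible
    (p L : ℕ) (hp : 0 < p) (hL : 0 < L)
    (c : Fin p → ℂ) (hc : Function.Injective c) (hc0 : ∀ j, c j ≠ 0) :
    IsUnit (Matrix.of (fun (k idx : Fin (p * L)) =>
      let jq := finProdFinEquiv.symm idx
      ((Nat.choose ((k : ℕ) + 1 + L) (jq.2 : ℕ) : ℂ))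
        * c jq.1 ^ ((k : ℕ) + 1 + L - (jq.2 : ℕ)))) := by
  classical
  rw [← Matrix.linearIndependent_rows_iff_isUnit]
  rw [Fintype.linearIndependent_iff]
  intro v hv
  -- The linear relation evaluated at each column `(j, q)`.
  have hrel : ∀ (j : Fin p) (q : Fin L),
      ∑ k : Fin (p * L),
        v k * ((Nat.choose ((k : ℕ) + 1 + L) (q : ℕ) : ℂ)
          * c j ^ ((k : ℕ) + 1 + L - (q : ℕ))) = 0 := by
    intro j q
    have := congrFun hv (finProdFinEquiv (j, q))
    simp only [Finset.sum_apply, Pi.smul_apply, Matrix.row_apply, Matrix.of_apply, smul_eq_mul,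
      Equiv.symm_apply_apply, Pi.zero_apply] at this
    exact this
  -- The polynomial with coefficients `v`.
  set Q : Polynomial ℂ := ∑ k : Fin (p * L), Polynomial.C (v k) * Polynomial.X ^ (k : ℕ)
    with hQ
  set P : Polynomial ℂ := Polynomial.X ^ (L + 1) * Q with hP
  -- Show `v = 0` by contradiction.
  intro i
  by_contra hvi
  have hQne : Q ≠ 0 := by
    intro h
    apply hvi
    have : Q.coeff (i : ℕ) = v i := by
      rw [hQ, Polynomial.finset_sum_coeff]
      rw [Finset.sum_eq_single i]
      · simp
      · intro b _ hb
        have : (b : ℕ) ≠ (i : ℕ) := fun h => hb (Fin.ext h)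
        rw [Polynomial.coeff_C_mul, Polynomial.coeff_X_pow, if_neg (Ne.symm this), mul_zero]
      · simp
    rw [h] at this
    simpa using this.symm
  have hPne : P ≠ 0 := by
    rw [hP]
    exact mul_ne_zero (pow_ne_zero _ Polynomial.X_ne_zero) hQne
  -- Derivatives of `P` vanish at each `c j` up to order `L - 1`.
  have hder : ∀ (j : Fin p) (m : ℕ), m ≤ L - 1 →
      (Polynomial.derivative^[m] P).IsRoot (c j) := by
    intro j m hm
    have hmL : m < L := lt_of_le_of_lt hm (Nat.sub_lt hL one_pos)
    have hPsum : P = ∑ k : Fin (p * L),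
        Polynomial.C (v k) * Polynomial.X ^ ((k : ℕ) + 1 + L) := by
      rw [hP, hQ, Finset.mul_sum]
      refine Finset.sum_congr rfl fun k _ => ?_
      rw [show (k : ℕ) + 1 + L = (L + 1) + (k : ℕ) by ring, pow_add]
      ring
    rw [Polynomial.IsRoot, hPsum, Polynomial.iterate_derivative_sum,
      Polynomial.eval_finset_sum]
    have key : ∀ k : Fin (p * L),
        Polynomial.eval (c j)
          (Polynomial.derivative^[m] (Polynomial.C (v k) *
            Polynomial.X ^ ((k : ℕ) + 1 + L)))
        = (Nat.factorial m : ℂ) *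
            (v k * ((Nat.choose ((k : ℕ) + 1 + L) m : ℂ)
              * c j ^ ((k : ℕ) + 1 + L - m))) := by
      intro k
      rw [Polynomial.iterate_derivative_C_mul,
        Polynomial.iterate_derivative_X_pow_eq_smul]
      rw [Nat.descFactorial_eq_factorial_mul_choose]
      push_cast
      simp only [Polynomial.eval_smul, Polynomial.eval_mul, Polynomial.eval_C,
        Polynomial.eval_pow, Polynomial.eval_X, smul_eq_mul]
      try ring
    rw [Finset.sum_congr rfl fun k _ => key k, ← Finset.mul_sum]
    have hq : ∑ k : Fin (p * L),
        v k * ((Nat.choose ((k : ℕ) + 1 + L) m : ℂ)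
          * c j ^ ((k : ℕ) + 1 + L - m)) = 0 := by
      have := hrel j ⟨m, hmL⟩
      simpa using this
    rw [hq, mul_zero]
  -- Hence `(X - C (c j)) ^ L` divides `P`.
  have hdvdP : ∀ j : Fin p, (Polynomial.X - Polynomial.C (c j)) ^ L ∣ P := by
    intro j
    have hlt : L - 1 < P.rootMultiplicity (c j) := by
      apply Polynomial.lt_rootMultiplicity_of_isRoot_iterate_derivative_of_mem_nonZeroDivisors'
        hPne (fun m hm => hder j m hm)
      intro m _ hm0
      exact mem_nonZeroDivisors_of_ne_zero (by exact_mod_cast hm0)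
    have hL' : L ≤ P.rootMultiplicity (c j) := by omega
    exact dvd_trans (pow_dvd_pow _ hL') (P.pow_rootMultiplicity_dvd (c j))
  -- Coprimality with `X ^ (L + 1)` gives divisibility of `Q`.
  have hdvdQ : ∀ j : Fin p, (Polynomial.X - Polynomial.C (c j)) ^ L ∣ Q := by
    intro j
    have hco : IsCoprime ((Polynomial.X - Polynomial.C (c j)) ^ L)
        ((Polynomial.X ^ (L + 1) : Polynomial ℂ)) := by
      have h1 : IsCoprime (Polynomial.X - Polynomial.C (c j))
          ((Polynomial.X : Polynomial ℂ) - Polynomial.C 0) := by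
        apply Polynomial.isCoprime_X_sub_C_of_isUnit_sub
        simpa using (Ne.isUnit (sub_ne_zero.mpr (hc0 j)))
      simp only [map_zero, sub_zero] at h1
      exact (h1.pow : _)
    have h := hdvdP j
    rw [hP] at h
    exact hco.dvd_of_dvd_mul_left h
  -- The product of all these divides `Q`.
  have hprod : (∏ j : Fin p, (Polynomial.X - Polynomial.C (c j)) ^ L) ∣ Q := by
    apply Fintype.prod_dvd_of_coprime
    · intro a b hab
      exact ((Polynomial.pairwise_coprime_X_sub_C hc hab).pow : _)
    · exact hdvdQ
  -- Degree contradiction.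
  have hdegprod : (∏ j : Fin p, (Polynomial.X - Polynomial.C (c j)) ^ L).natDegree
      = p * L := by
    rw [Polynomial.natDegree_prod]
    · simp [Polynomial.natDegree_pow, Polynomial.natDegree_X_sub_C, Finset.sum_const,
        Finset.card_univ, Fintype.card_fin, mul_comm]
    · intro j _
      exact pow_ne_zero _ (Polynomial.X_sub_C_ne_zero (c j))
  have hle : p * L ≤ Q.natDegree := by
    rw [← hdegprod]
    exact Polynomial.natDegree_le_of_dvd hprod hQne
  have hlt : Q.natDegree ≤ p * L - 1 := by
    rw [hQ]
    apply Polynomial.natDegree_sum_le_of_forall_le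
    intro k _
    refine le_trans (Polynomial.natDegree_C_mul_le _ _) ?_
    rw [Polynomial.natDegree_X_pow]
    omega
  have : 0 < p * L := Nat.mul_pos hp hL
  omega
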